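/- Let 𝒞 be a Z2Z4-additive code and C = Φ(𝒞) the corresponding Z2Z4-linear code. Then K(C) = {Φ(u) : u ∈ 𝒞 and 2(u*v) ∈ 𝒞 for all v ∈ 𝒞}. -/
import Mathlib


/-- The ambient group `Z2^α × Z4^β`, with componentwise ring structure
(so `u * v` is the componentwise product). -/
abbrev Amb (α β : ℕ) := (Fin α → ZMod 2) × (Fin β → ZMod 4)

/-- The binary space `Z2^α × (Z2²)^β ≅ Z2^(α+2β)`. -/
abbrev Bin (α β : ℕ) := (Fin α → ZMod 2) × (Fin β → ZMod 2 × ZMod 2)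

/-- The Gray map `φ : Z4 → Z2²` with `φ(0)=(0,0), φ(1)=(0,1), φ(2)=(1,1), φ(3)=(1,0)`. -/
def grayPair (y : ZMod 4) : ZMod 2 × ZMod 2 :=
  match y.val with
  | 0 => (0, 0)
  | 1 => (0, 1)
  | 2 => (1, 1)
  | _ => (1, 0)

/-- The extended Gray map `Φ : Z2^α × Z4^β → Z2^(α+2β)`. -/
def Phi {α β : ℕ} (u : Amb α β) : Bin α β :=
  (u.1, fun i => grayPair (u.2 i))

/-- The kernel `K(C) = {x | x + C = C}` of a binary code. -/
def kernelK {α β : ℕ} (C : Set (Bin α β)) : Set (Bin α β) :=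
  {x | (fun y => x + y) '' C = C}

/-- The rank of a binary code: the `Z2`-dimension of its linear span. -/
noncomputable def rankOf {α β : ℕ} (C : Set (Bin α β)) : ℕ :=
  Module.finrank (ZMod 2) (Submodule.span (ZMod 2) C)

/-- The dimension of the kernel of a binary code. -/
noncomputable def kerDim {α β : ℕ} (C : Set (Bin α β)) : ℕ :=
  Module.finrank (ZMod 2) (Submodule.span (ZMod 2) (kernelK C))

/-- A `Z2Z4`-additive code `C ⊆ Z2^α × Z4^β` is of type `(α,β;γ,δ;κ)`:
`|C| = 2^(γ+2δ)`, the number of elements `x` with `2x = 0` is `2^(γ+δ)`, and `κ` is the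
`Z2`-dimension of the projection onto the first `α` coordinates of `{x ∈ C | 2x = 0}`. -/
def IsTypeOf (α β γ δ κ : ℕ) (C : AddSubgroup (Amb α β)) : Prop :=
  Nat.card C = 2 ^ (γ + 2 * δ) ∧
  Nat.card {x : Amb α β | x ∈ C ∧ 2 • x = 0} = 2 ^ (γ + δ) ∧
  Module.finrank (ZMod 2)
    (Submodule.span (ZMod 2) (Prod.fst '' {x : Amb α β | x ∈ C ∧ 2 • x = 0})) = κ


lemma gray_inj : Function.Injective grayPair := by decide

lemma Phi_inj {α β : ℕ} : Function.Injective (Phi (α := α) (β := β)) := by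
  rintro ⟨a, b⟩ ⟨c, d⟩ h
  obtain ⟨h1, h2⟩ := Prod.mk.injEq .. ▸ h
  refine Prod.ext h1 (funext fun i => gray_inj ?_)
  exact congrFun h2 i

lemma Phi_zero {α β : ℕ} : Phi (0 : Amb α β) = 0 := by
  refine Prod.ext rfl (funext fun i => ?_)
  show grayPair 0 = 0
  decide

lemma Phi_add {α β : ℕ} (u v : Amb α β) :
    Phi u + Phi v = Phi (u + v + (u * v + u * v)) := by
  have h2 : ∀ a b : ZMod 2, a + b = a + b + (a * b + a * b) := by decide
  have h4 : ∀ a b : ZMod 4,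
      grayPair a + grayPair b = grayPair (a + b + (a * b + a * b)) := by decide
  simp only [Phi, Prod.ext_iff, Prod.fst_add, Prod.snd_add]
  refine ⟨funext fun i => ?_, funext fun i => ?_⟩
  · simp only [Pi.add_apply, Pi.mul_apply]
    exact h2 _ _
  · simp only [Pi.add_apply, Pi.mul_apply]
    exact h4 _ _

lemma bin_add_self {α β : ℕ} (x : Bin α β) : x + x = 0 := by
  have h2 : ∀ a : ZMod 2, a + a = 0 := by decide
  have hp : ∀ a : ZMod 2 × ZMod 2, a + a = 0 := by decide
  exact Prod.ext (funext fun i => h2 _) (funext fun i => hp _)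

/-- `K(Φ(𝒞)) = {Φ(u) : u ∈ 𝒞, ∀ v ∈ 𝒞, 2(u*v) ∈ 𝒞}`. -/
theorem kernel_eq_gray_image (α β : ℕ) (C : AddSubgroup (Amb α β)) :
    kernelK (Phi '' (C : Set (Amb α β))) =
      Phi '' {u : Amb α β | u ∈ C ∧ ∀ v ∈ C, 2 * (u * v) ∈ C} := by
  ext x
  constructor
  · intro hx
    have h0 : x ∈ Phi '' (C : Set (Amb α β)) := by
      rw [← hx]
      refine ⟨Phi 0, ⟨0, C.zero_mem, rfl⟩, ?_⟩
      simp [Phi_zero]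
    obtain ⟨u, hu, rfl⟩ := h0
    refine ⟨u, ⟨hu, fun v hv => ?_⟩, rfl⟩
    have hmem : Phi u + Phi v ∈ Phi '' (C : Set (Amb α β)) := by
      rw [← hx]
      exact ⟨Phi v, ⟨v, hv, rfl⟩, rfl⟩
    obtain ⟨w, hw, hweq⟩ := hmem
    rw [Phi_add] at hweq
    have heq : w = u + v + (u * v + u * v) := Phi_inj hweq
    have hmem2 : u + v + (u * v + u * v) ∈ C := heq ▸ hw
    have hsub := C.sub_mem (C.sub_mem hmem2 hu) hv
    have hr : u + v + (u * v + u * v) - u - v = 2 * (u * v) := by ring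
    rwa [hr] at hsub
  · rintro ⟨u, ⟨hu, h2⟩, rfl⟩
    have hsub : ∀ z ∈ Phi '' (C : Set (Amb α β)),
        Phi u + z ∈ Phi '' (C : Set (Amb α β)) := by
      rintro z ⟨v, hv, rfl⟩
      rw [Phi_add]
      have h2' := h2 v hv
      rw [two_mul] at h2'
      exact ⟨_, C.add_mem (C.add_mem hu hv) h2', rfl⟩
    show _ = _
    ext z
    constructor
    · rintro ⟨w, hw, rfl⟩
      exact hsub w hw
    · intro hz
      refine ⟨Phi u + z, hsub z hz, ?_⟩
      show Phi u + (Phi u + z) = z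
      rw [← add_assoc, bin_add_self, zero_add]
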